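/- Let a, b, r > 0 with a ≠ b. Then the naive approximation of the Minkowski sum of the ellipse and the disc by the ellipse with semi-axes a + r and b + r is not correct: there exist p ∈ E(a,b) and q ∈ ℝ² with ‖q‖ ≤ r such that p + q ∉ E(a+r, b+r). In other words, E(a,b) + closedBall(0,r) is not contained in E(a+r, b+r). -/

import Mathlib

set_option maxHeartbeats 800000


open Pointwise

/-- The solid ellipse with semi-axes `a` and `b`, centered at the origin of `ℝ²`. -/
def ellipse (a b : ℝ) : Set (EuclideanSpace ℝ (Fin 2)) :=
  {p | (p 0) ^ 2 / a ^ 2 + (p 1) ^ 2 / b ^ 2 ≤ 1}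

/-- For `a ≠ b`, the naive enlargement of the ellipse by `r` in both semi-axes does
not bound the Minkowski sum of the ellipse with the disc of radius `r`: there are
`p ∈ E(a,b)` and `q` with `‖q‖ ≤ r` such that `p + q ∉ E(a+r, b+r)`. -/
theorem naive_enlargement_incorrect
    (a b r : ℝ) (ha : 0 < a) (hb : 0 < b) (hr : 0 < r) (hab : a ≠ b) :
    (∃ p ∈ ellipse a b, ∃ q : EuclideanSpace ℝ (Fin 2),
      ‖q‖ ≤ r ∧ p + q ∉ ellipse (a + r) (b + r)) ∧
    ¬ (ellipse a b + Metric.closedBall (0 : EuclideanSpace ℝ (Fin 2)) r ⊆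
        ellipse (a + r) (b + r)) := by
  set s := Real.sqrt (a ^ 2 + b ^ 2) with hs_def
  have hs2 : s ^ 2 = a ^ 2 + b ^ 2 := Real.sq_sqrt (by positivity)
  have hs : 0 < s := Real.sqrt_pos.2 (by positivity)
  clear_value s
  have h2 : (Real.sqrt 2) ^ 2 = 2 := Real.sq_sqrt (by norm_num)
  have h2p : (0:ℝ) < Real.sqrt 2 := Real.sqrt_pos.2 (by norm_num)
  set p : EuclideanSpace ℝ (Fin 2) := !₂[a ^ 2 / s, b ^ 2 / s] with hp_def
  set q : EuclideanSpace ℝ (Fin 2) := !₂[r / Real.sqrt 2, r / Real.sqrt 2] with hq_def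
  have hp0 : p 0 = a ^ 2 / s := rfl
  have hp1 : p 1 = b ^ 2 / s := rfl
  have hq0 : q 0 = r / Real.sqrt 2 := rfl
  have hq1 : q 1 = r / Real.sqrt 2 := rfl
  have hpq0 : (p + q) 0 = a ^ 2 / s + r / Real.sqrt 2 := rfl
  have hpq1 : (p + q) 1 = b ^ 2 / s + r / Real.sqrt 2 := rfl
  have hpmem : p ∈ ellipse a b := by
    simp only [ellipse, Set.mem_setOf_eq, hp0, hp1]
    have : (a ^ 2 / s) ^ 2 / a ^ 2 + (b ^ 2 / s) ^ 2 / b ^ 2 = (a ^ 2 + b ^ 2) / s ^ 2 := by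
      field_simp
    rw [this, hs2]
    exact le_of_eq (div_self (by positivity))
  have hqnorm : ‖q‖ ≤ r := by
    rw [EuclideanSpace.norm_eq, Fin.sum_univ_two, hq0, hq1]
    have hsum : ‖r / Real.sqrt 2‖ ^ 2 + ‖r / Real.sqrt 2‖ ^ 2 = r ^ 2 := by
      rw [Real.norm_eq_abs, sq_abs, div_pow, h2]
      ring
    rw [hsum, Real.sqrt_sq hr.le]
  have hnot : p + q ∉ ellipse (a + r) (b + r) := by
    intro h
    simp only [ellipse, Set.mem_setOf_eq, hpq0, hpq1] at h
    set X := a ^ 2 / s + r / Real.sqrt 2 with hX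
    set Y := b ^ 2 / s + r / Real.sqrt 2 with hY
    clear_value X Y
    have hA : (0:ℝ) < a + r := by linarith
    have hB : (0:ℝ) < b + r := by linarith
    -- Cauchy–Schwarz: (X+Y)^2 ≤ (A^2+B^2)(X^2/A^2+Y^2/B^2)
    have hcs : (X + Y) ^ 2 ≤ (a + r) ^ 2 + (b + r) ^ 2 := by
      have key : ((a + r) ^ 2 + (b + r) ^ 2) * (X ^ 2 * (b + r) ^ 2 + Y ^ 2 * (a + r) ^ 2)
          - (X + Y) ^ 2 * ((a + r) ^ 2 * (b + r) ^ 2)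
          = ((b + r) ^ 2 * X - (a + r) ^ 2 * Y) ^ 2 := by ring
      have h' : X ^ 2 * (b + r) ^ 2 + Y ^ 2 * (a + r) ^ 2 ≤ (a + r) ^ 2 * (b + r) ^ 2 := by
        have e : (a + r) ^ 2 * (b + r) ^ 2 * (X ^ 2 / (a + r) ^ 2 + Y ^ 2 / (b + r) ^ 2)
            = X ^ 2 * (b + r) ^ 2 + Y ^ 2 * (a + r) ^ 2 := by
          field_simp
        have hm := mul_le_mul_of_nonneg_left h
          (show (0:ℝ) ≤ (a + r) ^ 2 * (b + r) ^ 2 by positivity)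
        rw [mul_one, e] at hm
        exact hm
      have h'' := mul_le_mul_of_nonneg_left h'
        (show (0:ℝ) ≤ (a + r) ^ 2 + (b + r) ^ 2 by positivity)
      have t1 : (X + Y) ^ 2 * ((a + r) ^ 2 * (b + r) ^ 2)
          ≤ ((a + r) ^ 2 + (b + r) ^ 2) * ((a + r) ^ 2 * (b + r) ^ 2) := by
        linarith [sq_nonneg ((b + r) ^ 2 * X - (a + r) ^ 2 * Y), key, h'']
      exact le_of_mul_le_mul_right t1 (mul_pos (pow_pos hA 2) (pow_pos hB 2))
    -- but X + Y = s + r * √2, and (s + r√2)^2 > (a+r)^2 + (b+r)^2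
    have hXY : X + Y = s + r * Real.sqrt 2 := by
      have h1 : a ^ 2 / s + b ^ 2 / s = s := by
        rw [← add_div, ← hs2, sq, mul_div_assoc, div_self hs.ne', mul_one]
      have hrt : r / Real.sqrt 2 + r / Real.sqrt 2 = r * Real.sqrt 2 := by
        rw [← add_div, div_eq_iff h2p.ne']
        nlinarith [h2]
      rw [hX, hY]
      linarith
    rw [hXY] at hcs
    have hab2 : (a - b) ^ 2 > 0 := by
      have h0 : a - b ≠ 0 := sub_ne_zero.2 hab
      exact sq_abs (a - b) ▸ pow_pos (abs_pos.2 h0) 2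
    have h3 : r * (Real.sqrt 2 * s) ≤ r * (a + b) := by
      have e1 : (s + r * Real.sqrt 2) ^ 2
          = s ^ 2 + 2 * (r * (Real.sqrt 2 * s)) + (Real.sqrt 2) ^ 2 * r ^ 2 := by ring
      rw [e1, hs2, h2] at hcs
      nlinarith [hcs]
    have h4 : Real.sqrt 2 * s ≤ a + b := le_of_mul_le_mul_left h3 hr
    have h5 : (Real.sqrt 2 * s) ^ 2 = 2 * (a ^ 2 + b ^ 2) := by rw [mul_pow, h2, hs2]
    nlinarith [h4, h5, hab2, mul_pos h2p hs]
  refine ⟨⟨p, hpmem, q, hqnorm, hnot⟩, fun hsub => hnot (hsub ?_)⟩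
  exact Set.add_mem_add hpmem (mem_closedBall_zero_iff.2 hqnorm)
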